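/- (Bounded distance to optimal solution for DGDᵗ) Suppose α ≤ min{(1 + λ_n(Wᵗ))/L, c₄} and x_0 = 0. Then for every δ > 0 and every k ≥ 0, ‖x̄_{k+1} − x*‖² ≤ c₁² ‖x̄_k − x*‖² + c₃²/(1 − βᵗ)², where c₁² = 1 − αc₂ + αδ − α²δc₂, c₂ = 2μ_f̄ L_f̄/(μ_f̄ + L_f̄), c₃² = α³(α + δ⁻¹)L²D², and D = √(2L Σ_i (f_i(0) − f_i*)). -/

import Mathlib

open Finset Filter

noncomputable section

/-- A block `ℝ^p` with the Euclidean norm. -/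
abbrev Vec (p : ℕ) := EuclideanSpace ℝ (Fin p)

/-- The concatenated space `ℝ^{np}` (n blocks of size p) with the Euclidean norm. -/
abbrev CVec (n p : ℕ) := PiLp 2 (fun _ : Fin n => Vec p)

/-- Action of the Kronecker product `W ⊗ I_p` on a concatenated vector of `ℝ^{np}`. -/
def kron {n p : ℕ} (W : Matrix (Fin n) (Fin n) ℝ) (x : CVec n p) : CVec n p :=
  WithLp.toLp 2 (fun i => ∑ j, W i j • x j)

/-- Concatenated gradient `∇f(x) = (∇f₁(x₁); …; ∇fₙ(xₙ))`. -/
def gradConcat {n p : ℕ} (f : Fin n → Vec p → ℝ) (x : CVec n p) : CVec n p :=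
  WithLp.toLp 2 (fun i => gradient (f i) (x i))

local notation "⟪" x ", " y "⟫" => @inner ℝ _ _ x y

set_option maxHeartbeats 1000000

section Aux
open Topology
variable {E : Type*} [NormedAddCommGroup E] [InnerProductSpace ℝ E] [CompleteSpace E]

lemma line_hasDerivAt {f : E → ℝ} {g : E → E} (hg : ∀ z, HasGradientAt f (g z) z)
    (x v : E) (s : ℝ) :
    HasDerivAt (fun r : ℝ => f (x + r • v)) ⟪g (x + s • v), v⟫ s := by
  have h1 : HasFDerivAt f (InnerProductSpace.toDual ℝ E (g (x + s • v))) (x + s • v) :=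
    (hasGradientAt_iff_hasFDerivAt.1 (hg _))
  have h2 : HasDerivAt (fun r : ℝ => x + r • v) v s := by
    simpa using ((hasDerivAt_id s).smul_const v).const_add x
  have h3 := h1.comp_hasDerivAt s h2
  simp only [InnerProductSpace.toDual_apply_apply] at h3
  exact h3

lemma convex_lower {f : E → ℝ} {g : E → E} (hc : ConvexOn ℝ Set.univ f)
    (hg : ∀ z, HasGradientAt f (g z) z) (x y : E) :
    f x + ⟪g x, y - x⟫ ≤ f y := by
  set φ : ℝ → ℝ := fun r => f (x + r • (y - x)) with hφ
  have hd : HasDerivAt φ ⟪g x, y - x⟫ 0 := by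
    simpa using line_hasDerivAt hg x (y - x) 0
  have hs : Tendsto (slope φ 0) (𝓝[>] 0) (𝓝 ⟪g x, y - x⟫) :=
    (hasDerivAt_iff_tendsto_slope.1 hd).mono_left
      (nhdsWithin_mono _ (fun r hr => ne_of_gt hr))
  have hev : ∀ᶠ r in 𝓝[>] (0:ℝ), slope φ 0 r ≤ f y - f x := by
    filter_upwards [Ioc_mem_nhdsGT_of_mem (by simp : (0:ℝ) ∈ Set.Ico 0 1)] with r hr
    have hr0 : 0 < r := hr.1
    have hcomb : φ r ≤ (1 - r) * f x + r * f y := by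
      have h := hc.2 (Set.mem_univ x) (Set.mem_univ y)
        (by linarith [hr.2] : (0:ℝ) ≤ 1 - r) hr0.le (by ring)
      have hpt : (1 - r) • x + r • y = x + r • (y - x) := by
        rw [smul_sub]; module
      simpa [hpt] using h
    have : (φ r - φ 0) / r ≤ f y - f x := by
      rw [div_le_iff₀ hr0]
      have hφ0 : φ 0 = f x := by simp [hφ]
      rw [hφ0]
      nlinarith [hcomb]
    simpa [slope_def_field, hφ] using this
  have := le_of_tendsto hs hev
  linarith

lemma grad_zero_of_isMinOn {f : E → ℝ} {g x : E} (hg : HasGradientAt f g x)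
    (hmin : ∀ z, f x ≤ f z) : g = 0 := by
  have hloc : IsLocalMin f x := Filter.Eventually.of_forall hmin
  have h0 : fderiv ℝ f x = 0 := hloc.fderiv_eq_zero
  have hfd := hasGradientAt_iff_hasFDerivAt.1 hg
  have := hfd.fderiv
  rw [h0] at this
  have := congrArg (InnerProductSpace.toDual ℝ E).symm this
  simpa using this.symm

lemma qub {f : E → ℝ} {g : E → E} (hg : ∀ z, HasGradientAt f (g z) z)
    {K : ℝ} (hK : 0 ≤ K) (hl : ∀ a b, ‖g a - g b‖ ≤ K * ‖a - b‖) (x y : E) :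
    f y ≤ f x + ⟪g x, y - x⟫ + K / 2 * ‖y - x‖ ^ 2 := by
  set v := y - x with hv
  have hgc : Continuous g := by
    rw [Metric.continuous_iff]
    intro a ε hε
    rcases eq_or_lt_of_le hK with hK0 | hKpos
    · exact ⟨1, one_pos, fun b _ => by
        have := hl b a
        rw [← hK0] at this
        simpa [dist_eq_norm] using lt_of_le_of_lt (by simpa using this) hε⟩
    · refine ⟨ε / K, by positivity, fun b hb => ?_⟩
      rw [dist_eq_norm] at hb ⊢
      calc ‖g b - g a‖ ≤ K * ‖b - a‖ := hl b a
      _ < K * (ε / K) := by apply mul_lt_mul_of_pos_left hb hKpos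
      _ = ε := by field_simp
  have hcont : Continuous fun r : ℝ => ⟪g (x + r • v), v⟫ := by
    apply Continuous.inner
    · exact hgc.comp (by continuity)
    · exact continuous_const
  have hderiv : ∀ r ∈ Set.uIcc (0:ℝ) 1,
      HasDerivAt (fun s : ℝ => f (x + s • v)) ⟪g (x + r • v), v⟫ r :=
    fun r _ => line_hasDerivAt hg x v r
  have hint : IntervalIntegrable (fun r : ℝ => ⟪g (x + r • v), v⟫) MeasureTheory.volume 0 1 :=
    hcont.intervalIntegrable 0 1
  have heq : ∫ r in (0:ℝ)..1, ⟪g (x + r • v), v⟫ = f (x + (1:ℝ) • v) - f (x + (0:ℝ) • v) :=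
    intervalIntegral.integral_eq_sub_of_hasDerivAt hderiv hint
  have hmono : ∫ r in (0:ℝ)..1, ⟪g (x + r • v), v⟫ ≤
      ∫ r in (0:ℝ)..1, (⟪g x, v⟫ + K * r * ‖v‖ ^ 2) := by
    apply intervalIntegral.integral_mono_on (by norm_num) hint
    · exact (Continuous.intervalIntegrable (by continuity) 0 1)
    · intro r hr
      have h1 : ⟪g (x + r • v), v⟫ - ⟪g x, v⟫ = ⟪g (x + r • v) - g x, v⟫ := by
        rw [inner_sub_left]
      have h2 : ⟪g (x + r • v) - g x, v⟫ ≤ ‖g (x + r • v) - g x‖ * ‖v‖ :=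
        real_inner_le_norm _ _
      have h3 : ‖g (x + r • v) - g x‖ ≤ K * (r * ‖v‖) := by
        have := hl (x + r • v) x
        simpa [norm_smul, abs_of_nonneg hr.1, mul_assoc] using this
      nlinarith [norm_nonneg v, mul_le_mul_of_nonneg_right h3 (norm_nonneg v)]
  have hRHS : ∫ r in (0:ℝ)..1, (⟪g x, v⟫ + K * r * ‖v‖ ^ 2) =
      ⟪g x, v⟫ + K / 2 * ‖v‖ ^ 2 := by
    rw [intervalIntegral.integral_add (intervalIntegrable_const)
      (by apply Continuous.intervalIntegrable; continuity)]
    simp only [intervalIntegral.integral_const, smul_eq_mul, mul_one, sub_zero]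
    have : ∫ r in (0:ℝ)..1, K * r * ‖v‖ ^ 2 = K * ‖v‖^2 * ∫ r in (0:ℝ)..1, r := by
      rw [← intervalIntegral.integral_const_mul]
      congr 1; ext r; ring
    rw [this, integral_id]
    ring
  have hfy : f (x + (1:ℝ) • v) = f y := by simp [hv]
  have hfx : f (x + (0:ℝ) • v) = f x := by simp
  rw [hfy, hfx] at heq
  linarith [hmono.trans_eq hRHS, heq.symm.le, heq.le]

lemma inner_hasGradientAt (c x : E) : HasGradientAt (fun z => ⟪c, z⟫) c x := by
  rw [hasGradientAt_iff_hasFDerivAt]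
  have : HasFDerivAt (fun z => (InnerProductSpace.toDual ℝ E c) z)
      (InnerProductSpace.toDual ℝ E c) x := (InnerProductSpace.toDual ℝ E c).hasFDerivAt
  simpa [InnerProductSpace.toDual_apply_apply] using this

lemma sub_inner_hasGradientAt {f : E → ℝ} {g : E → E} (hg : ∀ z, HasGradientAt f (g z) z)
    (c : E) (x : E) : HasGradientAt (fun z => f z - ⟪c, z⟫) (g x - c) x := by
  rw [hasGradientAt_iff_hasFDerivAt] at *
  have h1 := hasGradientAt_iff_hasFDerivAt.1 (hg x)
  have h2 := hasGradientAt_iff_hasFDerivAt.1 (inner_hasGradientAt c x)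
  have := h1.sub h2
  exact this.congr_fderiv (map_sub _ _ _).symm

lemma convexOn_sub_inner {f : E → ℝ} (hc : ConvexOn ℝ Set.univ f) (c : E) :
    ConvexOn ℝ Set.univ (fun z => f z - ⟪c, z⟫) := by
  refine ⟨convex_univ, fun x _ y _ a b ha hb hab => ?_⟩
  have := hc.2 (Set.mem_univ x) (Set.mem_univ y) ha hb hab
  simp only [smul_eq_mul] at *
  have hlin : ⟪c, a • x + b • y⟫ = a * ⟪c, x⟫ + b * ⟪c, y⟫ := by
    rw [inner_add_right, real_inner_smul_right, real_inner_smul_right]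
  linarith

/-- Cocoercivity-type lower bound from convexity + quadratic upper bound. -/
lemma lower_quad {f : E → ℝ} {g : E → E} (hc : ConvexOn ℝ Set.univ f)
    (hg : ∀ z, HasGradientAt f (g z) z) {K : ℝ} (hK : 0 < K)
    (hq : ∀ a b : E, f b ≤ f a + ⟪g a, b - a⟫ + K / 2 * ‖b - a‖ ^ 2) (x y : E) :
    f x + ⟪g x, y - x⟫ + 1 / (2 * K) * ‖g y - g x‖ ^ 2 ≤ f y := by
  set φ : E → ℝ := fun z => f z - ⟪g x, z⟫ with hφ
  have hgφ : ∀ z, HasGradientAt φ (g z - g x) z := fun z => sub_inner_hasGradientAt hg _ z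
  have hcφ : ConvexOn ℝ Set.univ φ := convexOn_sub_inner hc _
  -- φ has minimum at x
  have hminφ : ∀ z, φ x ≤ φ z := by
    intro z
    have := convex_lower hcφ hgφ x z
    simpa [sub_self] using this
  -- quadratic upper bound for φ
  have hqφ : ∀ a b : E, φ b ≤ φ a + ⟪g a - g x, b - a⟫ + K / 2 * ‖b - a‖ ^ 2 := by
    intro a b
    have := hq a b
    have hlin : ⟪g x, b⟫ - ⟪g x, a⟫ = ⟪g x, b - a⟫ := by rw [inner_sub_right]
    simp only [hφ, inner_sub_left]
    linarith [hq a b, (by rw [inner_sub_right] : ⟪g x, b - a⟫ = ⟪g x, b⟫ - ⟪g x, a⟫)]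
  -- evaluate at y - K⁻¹ • (g y - g x)
  have key := hqφ y (y - K⁻¹ • (g y - g x))
  have h1 : φ x ≤ φ (y - K⁻¹ • (g y - g x)) := hminφ _
  have hsub : y - K⁻¹ • (g y - g x) - y = -(K⁻¹ • (g y - g x)) := by abel
  rw [hsub] at key
  have hin : ⟪g y - g x, -(K⁻¹ • (g y - g x))⟫ = -(K⁻¹ * ‖g y - g x‖ ^ 2) := by
    rw [inner_neg_right, real_inner_smul_right, real_inner_self_eq_norm_sq]
  have hnrm : ‖-(K⁻¹ • (g y - g x))‖ ^ 2 = K⁻¹ ^ 2 * ‖g y - g x‖ ^ 2 := by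
    rw [norm_neg, norm_smul, mul_pow]
    congr 1
    rw [Real.norm_eq_abs, abs_of_pos (inv_pos.2 hK)]
  rw [hin, hnrm] at key
  have hKne : K ≠ 0 := ne_of_gt hK
  have hval : φ y + -(K⁻¹ * ‖g y - g x‖ ^ 2) + K / 2 * (K⁻¹ ^ 2 * ‖g y - g x‖ ^ 2)
      = φ y - 1 / (2 * K) * ‖g y - g x‖ ^ 2 := by field_simp; ring
  rw [hval] at key
  have h2 : φ x ≤ φ y - 1 / (2 * K) * ‖g y - g x‖ ^ 2 := h1.trans key
  have hφx : φ x = f x - ⟪g x, x⟫ := rfl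
  have hφy : φ y = f y - ⟪g x, y⟫ := rfl
  have : ⟪g x, y - x⟫ = ⟪g x, y⟫ - ⟪g x, x⟫ := by rw [inner_sub_right]
  rw [hφx, hφy] at h2
  linarith

/-- norm-squared gradient -/
lemma normsq_hasGradientAt (μ : ℝ) (x : E) :
    HasGradientAt (fun z : E => μ / 2 * ‖z‖ ^ 2) (μ • x) x := by
  rw [hasGradientAt_iff_hasFDerivAt]
  have h1 : HasFDerivAt (fun z : E => ⟪z, z⟫)
      ((fderivInnerCLM ℝ (x, x)).comp ((ContinuousLinearMap.id ℝ E).prod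
        (ContinuousLinearMap.id ℝ E))) x :=
    (hasFDerivAt_id x).inner ℝ (hasFDerivAt_id x)
  have h2 := h1.const_mul (μ / 2)
  have heq : ∀ z : E, μ / 2 * ⟪z, z⟫ = μ / 2 * ‖z‖ ^ 2 := fun z => by
    rw [real_inner_self_eq_norm_sq]
  have h3 : HasFDerivAt (fun z : E => μ / 2 * ‖z‖ ^ 2)
      ((μ / 2) • ((fderivInnerCLM ℝ (x, x)).comp ((ContinuousLinearMap.id ℝ E).prod
        (ContinuousLinearMap.id ℝ E)))) x := by
    apply h2.congr_of_eventuallyEq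
    filter_upwards with z using (heq z).symm
  refine h3.congr_fderiv ?_
  ext v
  simp [fderivInnerCLM_apply, InnerProductSpace.toDual_apply_apply, real_inner_smul_left,
    real_inner_comm]
  ring

lemma strong_mono {f : E → ℝ} {g : E → E} {μ : ℝ}
    (hsc : StrongConvexOn Set.univ μ f) (hg : ∀ z, HasGradientAt f (g z) z) (x y : E) :
    μ * ‖y - x‖ ^ 2 ≤ ⟪g y - g x, y - x⟫ := by
  have hh : ConvexOn ℝ Set.univ (fun z => f z - μ / 2 * ‖z‖ ^ 2) :=
    strongConvexOn_iff_convex.1 hsc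
  have hgh : ∀ z, HasGradientAt (fun z => f z - μ / 2 * ‖z‖ ^ 2) (g z - μ • z) z := by
    intro z
    rw [hasGradientAt_iff_hasFDerivAt] at *
    have h1 := hasGradientAt_iff_hasFDerivAt.1 (hg z)
    have h2 := hasGradientAt_iff_hasFDerivAt.1 (normsq_hasGradientAt μ z)
    exact (h1.sub h2).congr_fderiv (map_sub _ _ _).symm
  have e1 := convex_lower hh hgh x y
  have e2 := convex_lower hh hgh y x
  have hx : (x - y) = -(y - x) := by abel
  have : ⟪g x - μ • x, y - x⟫ + ⟪g y - μ • y, x - y⟫ ≤ 0 := by linarith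
  rw [hx, inner_neg_right] at this
  have hsplit : ⟪y - x, y - x⟫ = ⟪y, y - x⟫ - ⟪x, y - x⟫ := inner_sub_left _ _ _
  have hexp : ⟪g y - μ • y, y - x⟫ - ⟪g x - μ • x, y - x⟫ =
      ⟪g y - g x, y - x⟫ - μ * ⟪y - x, y - x⟫ := by
    simp only [inner_sub_left, real_inner_smul_left]
    ring
  have hself : ⟪y - x, y - x⟫ = ‖y - x‖ ^ 2 := real_inner_self_eq_norm_sq (y - x)
  rw [hself] at hexp
  linarith [hexp, this]

lemma coco_pair {f : E → ℝ} {g : E → E} (hc : ConvexOn ℝ Set.univ f)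
    (hg : ∀ z, HasGradientAt f (g z) z) {K : ℝ} (hK : 0 < K)
    (hq : ∀ a b : E, f b ≤ f a + ⟪g a, b - a⟫ + K / 2 * ‖b - a‖ ^ 2) (x y : E) :
    1 / K * ‖g y - g x‖ ^ 2 ≤ ⟪g y - g x, y - x⟫ := by
  have c1 := lower_quad hc hg hK hq x y
  have c2 := lower_quad hc hg hK hq y x
  have hxmy : x - y = -(y - x) := by abel
  rw [hxmy, inner_neg_right, norm_sub_rev (g x) (g y)] at c2
  have hsplit : ⟪g y - g x, y - x⟫ = ⟪g y, y - x⟫ - ⟪g x, y - x⟫ := inner_sub_left _ _ _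
  have hhalf : 1 / (2 * K) * ‖g y - g x‖ ^ 2 + 1 / (2 * K) * ‖g y - g x‖ ^ 2
      = 1 / K * ‖g y - g x‖ ^ 2 := by field_simp; ring
  linarith

lemma shifted_gradient {f : E → ℝ} {g : E → E} {μ : ℝ}
    (hg : ∀ z, HasGradientAt f (g z) z) (z : E) :
    HasGradientAt (fun z => f z - μ / 2 * ‖z‖ ^ 2) (g z - μ • z) z := by
  rw [hasGradientAt_iff_hasFDerivAt] at *
  have h1 := hasGradientAt_iff_hasFDerivAt.1 (hg z)
  have h2 := hasGradientAt_iff_hasFDerivAt.1 (normsq_hasGradientAt μ z)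
  exact (h1.sub h2).congr_fderiv (map_sub _ _ _).symm

lemma coercivity {f : E → ℝ} {g : E → E} {μ Lf : ℝ} (hμ : 0 < μ) (hLf : 0 < Lf)
    (hsc : StrongConvexOn Set.univ μ f) (hg : ∀ z, HasGradientAt f (g z) z)
    (hlip : ∀ a b : E, ‖g a - g b‖ ≤ Lf * ‖a - b‖) {xstar : E}
    (hmin : ∀ z, f xstar ≤ f z) (y : E) :
    μ * Lf * ‖y - xstar‖ ^ 2 + ‖g y‖ ^ 2 ≤ (μ + Lf) * ⟪g y, y - xstar⟫ := by
  have hconv : ConvexOn ℝ Set.univ f := hsc.convexOn (fun r => by positivity)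
  have hg0 : g xstar = 0 := grad_zero_of_isMinOn (hg xstar) hmin
  have hmono := strong_mono hsc hg xstar y
  rw [hg0, sub_zero] at hmono
  have hqubf := qub hg hLf.le hlip
  have hDq : ⟪y - xstar, y - xstar⟫ = ‖y - xstar‖ ^ 2 := real_inner_self_eq_norm_sq _
  rcases lt_or_ge μ Lf with hlt | hge
  · set h : E → ℝ := fun z => f z - μ / 2 * ‖z‖ ^ 2 with hh
    have hch : ConvexOn ℝ Set.univ h := strongConvexOn_iff_convex.1 hsc
    have hgh : ∀ z, HasGradientAt h (g z - μ • z) z := fun z => shifted_gradient hg z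
    have hqh : ∀ a b : E, h b ≤ h a + ⟪g a - μ • a, b - a⟫ + (Lf - μ) / 2 * ‖b - a‖ ^ 2 := by
      intro a b
      have hf := hqubf a b
      have e1 : ⟪g a - μ • a, b - a⟫ = ⟪g a, b - a⟫ - μ * ⟪a, b - a⟫ := by
        rw [inner_sub_left, real_inner_smul_left]
      have e2 : ‖b - a‖ ^ 2 = ‖b‖ ^ 2 - 2 * ⟪a, b⟫ + ‖a‖ ^ 2 := by
        rw [norm_sub_sq_real, real_inner_comm]
      have e3 : ⟪a, b - a⟫ = ⟪a, b⟫ - ‖a‖ ^ 2 := by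
        rw [inner_sub_right, real_inner_self_eq_norm_sq]
      simp only [hh]
      rw [e1, e3]
      nlinarith [hf, e2]
    have hcc := coco_pair hch hgh (by linarith : (0:ℝ) < Lf - μ) hqh xstar y
    have hdiff : g y - μ • y - (g xstar - μ • xstar) = g y - μ • (y - xstar) := by
      rw [hg0, smul_sub]; abel
    rw [hdiff] at hcc
    -- expand
    have eA : ⟪g y - μ • (y - xstar), y - xstar⟫ = ⟪g y, y - xstar⟫ - μ * ‖y - xstar‖ ^ 2 := by
      rw [inner_sub_left, real_inner_smul_left, hDq]
    have eN : ‖g y - μ • (y - xstar)‖ ^ 2 =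
        ‖g y‖ ^ 2 - 2 * μ * ⟪g y, y - xstar⟫ + μ ^ 2 * ‖y - xstar‖ ^ 2 := by
      rw [norm_sub_sq_real, real_inner_smul_right, norm_smul, mul_pow, Real.norm_eq_abs,
        sq_abs]
      ring
    rw [eA, eN] at hcc
    have hKpos : (0:ℝ) < Lf - μ := by linarith
    rw [div_mul_eq_mul_div, div_le_iff₀ hKpos, one_mul] at hcc
    nlinarith [hcc]
  · have hcc := coco_pair hconv hg hLf hqubf xstar y
    rw [hg0, sub_zero] at hcc
    rw [div_mul_eq_mul_div, div_le_iff₀ hLf, one_mul] at hcc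
    have t1 : μ * Lf * ‖y - xstar‖ ^ 2 ≤ μ * ⟪g y, y - xstar⟫ := by
      nlinarith [mul_le_mul_of_nonneg_left hmono hμ.le,
        mul_le_mul_of_nonneg_right (mul_le_mul_of_nonneg_left hge hμ.le)
          (sq_nonneg ‖y - xstar‖)]
    nlinarith [hcc, t1]

lemma contraction {f : E → ℝ} {g : E → E} {μ Lf : ℝ} (hμ : 0 < μ) (hLf : 0 < Lf)
    (hsc : StrongConvexOn Set.univ μ f) (hg : ∀ z, HasGradientAt f (g z) z)
    (hlip : ∀ a b : E, ‖g a - g b‖ ≤ Lf * ‖a - b‖) {xstar : E}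
    (hmin : ∀ z, f xstar ≤ f z) {α : ℝ} (hα : 0 < α) (hαle : α ≤ 2 / (μ + Lf)) (y : E) :
    ‖y - α • g y - xstar‖ ^ 2 ≤ (1 - α * (2 * μ * Lf / (μ + Lf))) * ‖y - xstar‖ ^ 2 := by
  have hs : (0:ℝ) < μ + Lf := by linarith
  have key := coercivity hμ hLf hsc hg hlip hmin y
  have hre : y - α • g y - xstar = (y - xstar) - α • g y := by abel
  rw [hre]
  have eN : ‖(y - xstar) - α • g y‖ ^ 2 =
      ‖y - xstar‖ ^ 2 - 2 * α * ⟪g y, y - xstar⟫ + α ^ 2 * ‖g y‖ ^ 2 := by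
    rw [norm_sub_sq_real, real_inner_smul_right, norm_smul, mul_pow, Real.norm_eq_abs,
      sq_abs, real_inner_comm]
    ring
  rw [eN]
  have k2 : 2 * α * ⟪g y, y - xstar⟫ ≥
      2 * α * ((μ * Lf * ‖y - xstar‖ ^ 2 + ‖g y‖ ^ 2) / (μ + Lf)) := by
    apply mul_le_mul_of_nonneg_left _ (by positivity : (0:ℝ) ≤ 2 * α)
    rw [div_le_iff₀ hs]
    linarith [key]
  have hc2 : α * (2 * μ * Lf / (μ + Lf)) * ‖y - xstar‖ ^ 2 =
      2 * α * ((μ * Lf * ‖y - xstar‖ ^ 2) / (μ + Lf)) := by ring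
  have hsplit : 2 * α * ((μ * Lf * ‖y - xstar‖ ^ 2 + ‖g y‖ ^ 2) / (μ + Lf)) =
      2 * α * ((μ * Lf * ‖y - xstar‖ ^ 2) / (μ + Lf)) + 2 * α * (‖g y‖ ^ 2 / (μ + Lf)) := by
    ring
  have hlast : α ^ 2 * ‖g y‖ ^ 2 ≤ 2 * α * (‖g y‖ ^ 2 / (μ + Lf)) := by
    have h1 : α * α ≤ α * (2 / (μ + Lf)) := mul_le_mul_of_nonneg_left hαle hα.le
    have := mul_le_mul_of_nonneg_right h1 (sq_nonneg ‖g y‖)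
    calc α ^ 2 * ‖g y‖ ^ 2 = α * α * ‖g y‖ ^ 2 := by ring
    _ ≤ α * (2 / (μ + Lf)) * ‖g y‖ ^ 2 := this
    _ = 2 * α * (‖g y‖ ^ 2 / (μ + Lf)) := by ring
  linarith [k2, hlast]

section SpecSec
variable {n : ℕ} (A : Matrix (Fin n) (Fin n) ℝ) (hA : A.IsHermitian)

abbrev Ev (n : ℕ) := EuclideanSpace ℝ (Fin n)

lemma inner_repr (b : OrthonormalBasis (Fin n) ℝ (Ev n)) (v w : Ev n) :
    ⟪v, w⟫ = ∑ i, b.repr v i * b.repr w i := by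
  rw [← b.repr.inner_map_map v w, PiLp.inner_apply]
  simp only [RCLike.inner_apply, conj_trivial]
  exact Finset.sum_congr rfl fun _ _ => mul_comm _ _

lemma normsq_repr (b : OrthonormalBasis (Fin n) ℝ (Ev n)) (v : Ev n) :
    ‖v‖ ^ 2 = ∑ i, (b.repr v i) ^ 2 := by
  rw [← real_inner_self_eq_norm_sq, inner_repr b v v]
  exact Finset.sum_congr rfl fun i _ => (sq _).symm

lemma repr_toEuclideanLin (v : Ev n) (i : Fin n) :
    hA.eigenvectorBasis.repr (Matrix.toEuclideanLin A v) i =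
      hA.eigenvalues i * hA.eigenvectorBasis.repr v i := by
  set b := hA.eigenvectorBasis with hb
  have hv : v = ∑ j, b.repr v j • b j := (b.sum_repr v).symm
  have hT : Matrix.toEuclideanLin A v = ∑ j, (b.repr v j * hA.eigenvalues j) • b j := by
    conv_lhs => rw [hv]
    rw [map_sum]
    refine Finset.sum_congr rfl fun j _ => ?_
    rw [map_smul]
    have : Matrix.toEuclideanLin A (b j) = hA.eigenvalues j • b j := by
      apply (WithLp.equiv 2 (Fin n → ℝ)).injective
      simpa [Matrix.piLp_ofLp_toEuclideanLin] using hA.mulVec_eigenvectorBasis j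
    rw [this, smul_smul, mul_comm]
  rw [hT, b.repr_apply_apply, inner_sum]
  have horth := orthonormal_iff_ite.1 b.orthonormal
  simp only [real_inner_smul_right, horth, mul_ite, mul_one, mul_zero]
  rw [Finset.sum_ite_eq]
  simp [mul_comm]

lemma quad_lower {lb : ℝ} (hlb : ∀ i, lb ≤ hA.eigenvalues i) (v : Ev n) :
    lb * ‖v‖ ^ 2 ≤ ⟪v, Matrix.toEuclideanLin A v⟫ := by
  set b := hA.eigenvectorBasis
  rw [inner_repr b, normsq_repr b]
  rw [Finset.mul_sum]
  apply Finset.sum_le_sum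
  intro i _
  rw [repr_toEuclideanLin]
  have := sq_nonneg (b.repr v i)
  calc lb * b.repr v i ^ 2 ≤ hA.eigenvalues i * b.repr v i ^ 2 :=
    mul_le_mul_of_nonneg_right (hlb i) this
  _ = b.repr v i * (hA.eigenvalues i * b.repr v i) := by ring

lemma norm_le_of_eig_abs_le {c : ℝ} (hc : 0 ≤ c) (habs : ∀ i, |hA.eigenvalues i| ≤ c)
    (v : Ev n) : ‖Matrix.toEuclideanLin A v‖ ≤ c * ‖v‖ := by
  set b := hA.eigenvectorBasis
  have hsq : ‖Matrix.toEuclideanLin A v‖ ^ 2 ≤ (c * ‖v‖) ^ 2 := by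
    rw [normsq_repr b, mul_pow, normsq_repr b v, Finset.mul_sum]
    apply Finset.sum_le_sum
    intro i _
    rw [repr_toEuclideanLin, mul_pow]
    apply mul_le_mul_of_nonneg_right _ (sq_nonneg _)
    calc hA.eigenvalues i ^ 2 = |hA.eigenvalues i| ^ 2 := (sq_abs _).symm
    _ ≤ c ^ 2 := by apply pow_le_pow_left₀ (abs_nonneg _) (habs i)
  have h1 := Real.sqrt_le_sqrt hsq
  rwa [Real.sqrt_sq (norm_nonneg _), Real.sqrt_sq (by positivity)] at h1

lemma norm_le_of_eig_abs_le_on {c : ℝ} (hc : 0 ≤ c) (i0 : Fin n)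
    (habs : ∀ i, i ≠ i0 → |hA.eigenvalues i| ≤ c) (v : Ev n)
    (hv : hA.eigenvectorBasis.repr v i0 = 0) :
    ‖Matrix.toEuclideanLin A v‖ ≤ c * ‖v‖ := by
  set b := hA.eigenvectorBasis
  have hsq : ‖Matrix.toEuclideanLin A v‖ ^ 2 ≤ (c * ‖v‖) ^ 2 := by
    rw [normsq_repr b, mul_pow, normsq_repr b v, Finset.mul_sum]
    apply Finset.sum_le_sum
    intro i _
    rw [repr_toEuclideanLin]
    by_cases h : i = i0
    · subst h; rw [hv]; simpa using (by positivity : (0:ℝ) ≤ c ^ 2 * b.repr v i0 ^ 2)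
    · rw [mul_pow]
      apply mul_le_mul_of_nonneg_right _ (sq_nonneg _)
      calc hA.eigenvalues i ^ 2 = |hA.eigenvalues i| ^ 2 := (sq_abs _).symm
      _ ≤ c ^ 2 := by apply pow_le_pow_left₀ (abs_nonneg _) (habs i h)
  have h1 := Real.sqrt_le_sqrt hsq
  rwa [Real.sqrt_sq (norm_nonneg _), Real.sqrt_sq (by positivity)] at h1

end SpecSec

section W
variable {n t : ℕ} {W : Matrix (Fin n) (Fin n) ℝ} (hWsymm : W.IsHermitian)
  {β : ℝ}

def onesV (n : ℕ) : Ev n := WithLp.toLp 2 (fun _ => (1 : ℝ))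

lemma toEuclideanLin_apply' (A : Matrix (Fin n) (Fin n) ℝ) (v : Ev n) (i : Fin n) :
    Matrix.toEuclideanLin A v i = ∑ j, A i j * v j := by
  rfl

lemma inner_onesV (v : Ev n) : ⟪onesV n, v⟫ = ∑ i, v i := by
  rw [PiLp.inner_apply]
  simp [onesV, RCLike.inner_apply, conj_trivial]

lemma W_ones (hrow : ∀ i, ∑ j, W i j = 1) :
    Matrix.toEuclideanLin W (onesV n) = onesV n := by
  refine PiLp.ext fun i => ?_
  rw [toEuclideanLin_apply']
  simp [onesV, hrow i]

lemma onesV_nonzero (hn : 1 ≤ n) : onesV n ≠ 0 := by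
  intro h
  have : (onesV n) ⟨0, hn⟩ = 0 := by rw [h]; rfl
  simp [onesV] at this

/-- the coordinates of `onesV` in the eigenbasis vanish away from the 1-eigenvalue index -/
lemma repr_onesV_eq_zero (hrow : ∀ i, ∑ j, W i j = 1) {i0 : Fin n}
    (hi0 : ∀ i, hWsymm.eigenvalues i = 1 → i = i0) {i : Fin n} (hne : i ≠ i0) :
    hWsymm.eigenvectorBasis.repr (onesV n) i = 0 := by
  have h1 := repr_toEuclideanLin W hWsymm (onesV n) i
  rw [W_ones hrow] at h1
  have hne1 : hWsymm.eigenvalues i ≠ 1 := fun h => hne (hi0 i h)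
  have := h1.symm
  rcases mul_eq_mul_right_iff.1 (by linarith [h1] : hWsymm.eigenvalues i *
      hWsymm.eigenvectorBasis.repr (onesV n) i = 1 * hWsymm.eigenvectorBasis.repr (onesV n) i)
    with h | h
  · exact absurd h hne1
  · exact h

lemma repr_perp_i0 (hn : 1 ≤ n) (hrow : ∀ i, ∑ j, W i j = 1) {i0 : Fin n}
    (hi0 : ∀ i, hWsymm.eigenvalues i = 1 → i = i0) {v : Ev n}
    (hv : ⟪onesV n, v⟫ = 0) : hWsymm.eigenvectorBasis.repr v i0 = 0 := by
  set b := hWsymm.eigenvectorBasis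
  have hexp : ⟪onesV n, v⟫ = ∑ i, b.repr (onesV n) i * b.repr v i := inner_repr b _ _
  have hsum : ∑ i, b.repr (onesV n) i * b.repr v i
      = b.repr (onesV n) i0 * b.repr v i0 := by
    apply Finset.sum_eq_single
    · intro i _ hne
      rw [repr_onesV_eq_zero hWsymm hrow hi0 hne, zero_mul]
    · intro h; exact absurd (Finset.mem_univ i0) h
  have hc0 : b.repr (onesV n) i0 ≠ 0 := by
    intro h0
    have hzero : ∀ i, b.repr (onesV n) i = 0 := by
      intro i
      by_cases hi : i = i0
      · rw [hi]; exact h0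
      · exact repr_onesV_eq_zero hWsymm hrow hi0 hi
    have : onesV n = 0 := by
      have := b.sum_repr (onesV n)
      rw [← this]
      apply Finset.sum_eq_zero
      intro i _
      rw [hzero i, zero_smul]
    exact onesV_nonzero hn this
  rw [hexp, hsum] at hv
  exact (mul_eq_zero.1 hv).resolve_left hc0

lemma W_perp_contract (hn : 1 ≤ n) (hrow : ∀ i, ∑ j, W i j = 1)
    (hβnn : 0 ≤ β)
    (hβub : ∀ i, hWsymm.eigenvalues i ≠ 1 → |hWsymm.eigenvalues i| ≤ β)
    {i0 : Fin n} (hi0 : ∀ i, hWsymm.eigenvalues i = 1 → i = i0)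
    {v : Ev n} (hv : ⟪onesV n, v⟫ = 0) :
    ‖Matrix.toEuclideanLin W v‖ ≤ β * ‖v‖ := by
  apply norm_le_of_eig_abs_le_on W hWsymm hβnn i0 _ v
    (repr_perp_i0 hWsymm hn hrow hi0 hv)
  intro i hne
  apply hβub
  intro h1
  exact hne (hi0 i h1)

lemma perp_preserved (hcol : ∀ j, ∑ i, W i j = 1) {v : Ev n}
    (hv : ⟪onesV n, v⟫ = 0) : ⟪onesV n, Matrix.toEuclideanLin W v⟫ = 0 := by
  rw [inner_onesV] at *
  rw [← hv]
  calc ∑ i, Matrix.toEuclideanLin W v i = ∑ i, ∑ j, W i j * v j := by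
        exact Finset.sum_congr rfl fun i _ => toEuclideanLin_apply' W v i
  _ = ∑ j, (∑ i, W i j) * v j := by rw [Finset.sum_comm]; simp [Finset.sum_mul]
  _ = ∑ j, v j := by simp [hcol]

lemma Wpow_perp_contract (hn : 1 ≤ n) (hrow : ∀ i, ∑ j, W i j = 1)
    (hcol : ∀ j, ∑ i, W i j = 1) (hβnn : 0 ≤ β)
    (hβub : ∀ i, hWsymm.eigenvalues i ≠ 1 → |hWsymm.eigenvalues i| ≤ β)
    {i0 : Fin n} (hi0 : ∀ i, hWsymm.eigenvalues i = 1 → i = i0)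
    (t : ℕ) {v : Ev n} (hv : ⟪onesV n, v⟫ = 0) :
    ‖Matrix.toEuclideanLin (W ^ t) v‖ ≤ β ^ t * ‖v‖ ∧
      ⟪onesV n, Matrix.toEuclideanLin (W ^ t) v⟫ = 0 := by
  induction t with
  | zero =>
    have h0 : Matrix.toEuclideanLin (W ^ 0) v = v := by
      rw [pow_zero, Matrix.toEuclideanLin_apply]
      simp [Matrix.one_mulVec]
    rw [h0]
    exact ⟨by simpa using le_refl ‖v‖, hv⟩
  | succ k ih =>
    have hsplit : Matrix.toEuclideanLin (W ^ (k + 1)) v =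
        Matrix.toEuclideanLin W (Matrix.toEuclideanLin (W ^ k) v) := by
      rw [Matrix.toEuclideanLin_apply, Matrix.toEuclideanLin_apply,
        Matrix.toEuclideanLin_apply]
      simp only [Equiv.apply_symm_apply]
      rw [Matrix.mulVec_mulVec, ← pow_succ']
    rw [hsplit]
    refine ⟨?_, perp_preserved hcol ih.2⟩
    calc ‖Matrix.toEuclideanLin W (Matrix.toEuclideanLin (W ^ k) v)‖
        ≤ β * ‖Matrix.toEuclideanLin (W ^ k) v‖ :=
          W_perp_contract hWsymm hn hrow hβnn hβub hi0 ih.2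
    _ ≤ β * (β ^ k * ‖v‖) := mul_le_mul_of_nonneg_left ih.1 hβnn
    _ = β ^ (k + 1) * ‖v‖ := by ring

lemma Wpow_norm_le (habs1 : ∀ i, |hWsymm.eigenvalues i| ≤ 1) (t : ℕ) (v : Ev n) :
    ‖Matrix.toEuclideanLin (W ^ t) v‖ ≤ ‖v‖ := by
  induction t with
  | zero =>
    have h0 : Matrix.toEuclideanLin (W ^ 0) v = v := by
      rw [pow_zero, Matrix.toEuclideanLin_apply]
      simp [Matrix.one_mulVec]
    rw [h0]
  | succ k ih =>
    have hsplit : Matrix.toEuclideanLin (W ^ (k + 1)) v =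
        Matrix.toEuclideanLin W (Matrix.toEuclideanLin (W ^ k) v) := by
      rw [Matrix.toEuclideanLin_apply, Matrix.toEuclideanLin_apply,
        Matrix.toEuclideanLin_apply]
      simp only [Equiv.apply_symm_apply]
      rw [Matrix.mulVec_mulVec, ← pow_succ']
    rw [hsplit]
    calc ‖Matrix.toEuclideanLin W (Matrix.toEuclideanLin (W ^ k) v)‖
        ≤ 1 * ‖Matrix.toEuclideanLin (W ^ k) v‖ :=
          norm_le_of_eig_abs_le W hWsymm zero_le_one habs1 _
    _ ≤ ‖v‖ := by rw [one_mul]; exact ih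

end W

variable {n p : ℕ}

/-- coordinate slice -/
def slc (x : CVec n p) (c : Fin p) : Ev n := WithLp.toLp 2 (fun j => x j c)

lemma kron_slc (A : Matrix (Fin n) (Fin n) ℝ) (x : CVec n p) (c : Fin p) :
    slc (kron A x) c = Matrix.toEuclideanLin A (slc x c) := by
  refine PiLp.ext fun i => ?_
  rw [toEuclideanLin_apply']
  show (∑ j, A i j • x j) c = _
  rw [WithLp.ofLp_sum, Finset.sum_apply]
  exact Finset.sum_congr rfl fun j _ => rfl

lemma normsq_piLp (x : CVec n p) : ‖x‖ ^ 2 = ∑ i, ‖x i‖ ^ 2 := by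
  rw [PiLp.norm_eq_of_L2, Real.sq_sqrt]
  positivity

lemma normsq_vec (v : Vec p) : ‖v‖ ^ 2 = ∑ c, (v c) ^ 2 := by
  rw [EuclideanSpace.norm_eq, Real.sq_sqrt]
  · exact Finset.sum_congr rfl fun c _ => sq_abs _
  · positivity

lemma normsq_slc (x : CVec n p) : ‖x‖ ^ 2 = ∑ c, ‖slc x c‖ ^ 2 := by
  rw [normsq_piLp]
  have h1 : ∀ i, ‖x i‖ ^ 2 = ∑ c, (x i c) ^ 2 := fun i => normsq_vec (x i)
  have h2 : ∀ c, ‖slc x c‖ ^ 2 = ∑ i, (x i c) ^ 2 := fun c => by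
    rw [normsq_vec (slc x c)]; rfl
  simp only [h1, h2]
  exact Finset.sum_comm

lemma inner_cvec (x y : CVec n p) : ⟪x, y⟫ = ∑ i, ⟪x i, y i⟫ := PiLp.inner_apply x y

lemma inner_vec (v w : Vec p) : ⟪v, w⟫ = ∑ c, v c * w c := by
  rw [PiLp.inner_apply]
  simp [RCLike.inner_apply, conj_trivial]
  exact Finset.sum_congr rfl fun _ _ => mul_comm _ _

lemma inner_slc (x y : CVec n p) : ⟪x, y⟫ = ∑ c, ⟪slc x c, slc y c⟫ := by
  rw [inner_cvec]
  have h1 : ∀ i, ⟪x i, y i⟫ = ∑ c, x i c * y i c := fun i => inner_vec _ _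
  have h2 : ∀ c, ⟪slc x c, slc y c⟫ = ∑ i, x i c * y i c := fun c => inner_vec _ _
  simp only [h1, h2]
  exact Finset.sum_comm

/-- blockwise contraction transfer -/
lemma kron_norm_le {A : Matrix (Fin n) (Fin n) ℝ} {b : ℝ} (hb : 0 ≤ b)
    {P : Ev n → Prop} (hP : ∀ v, P v → ‖Matrix.toEuclideanLin A v‖ ≤ b * ‖v‖)
    {x : CVec n p} (hx : ∀ c, P (slc x c)) : ‖kron A x‖ ≤ b * ‖x‖ := by
  have hsq : ‖kron A x‖ ^ 2 ≤ (b * ‖x‖) ^ 2 := by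
    rw [normsq_slc, mul_pow, normsq_slc x, Finset.mul_sum]
    apply Finset.sum_le_sum
    intro c _
    rw [kron_slc]
    have := hP (slc x c) (hx c)
    calc ‖Matrix.toEuclideanLin A (slc x c)‖ ^ 2 ≤ (b * ‖slc x c‖) ^ 2 := by
          apply pow_le_pow_left₀ (norm_nonneg _) this
    _ = b ^ 2 * ‖slc x c‖ ^ 2 := by ring
  have h1 := Real.sqrt_le_sqrt hsq
  rwa [Real.sqrt_sq (norm_nonneg _), Real.sqrt_sq (by positivity)] at h1

lemma kron_quad_lower {A : Matrix (Fin n) (Fin n) ℝ} {lb : ℝ}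
    (h : ∀ v : Ev n, lb * ‖v‖ ^ 2 ≤ ⟪v, Matrix.toEuclideanLin A v⟫) (x : CVec n p) :
    lb * ‖x‖ ^ 2 ≤ ⟪x, kron A x⟫ := by
  rw [inner_slc, normsq_slc, Finset.mul_sum]
  apply Finset.sum_le_sum
  intro c _
  rw [kron_slc]
  exact h _

lemma kron_quad_upper {A : Matrix (Fin n) (Fin n) ℝ}
    (h : ∀ v : Ev n, ‖Matrix.toEuclideanLin A v‖ ≤ ‖v‖) (x : CVec n p) :
    ⟪x, kron A x⟫ ≤ ‖x‖ ^ 2 := by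
  rw [inner_slc, normsq_slc]
  apply Finset.sum_le_sum
  intro c _
  rw [kron_slc]
  calc ⟪slc x c, Matrix.toEuclideanLin A (slc x c)⟫
      ≤ ‖slc x c‖ * ‖Matrix.toEuclideanLin A (slc x c)‖ := real_inner_le_norm _ _
  _ ≤ ‖slc x c‖ * ‖slc x c‖ := mul_le_mul_of_nonneg_left (h _) (norm_nonneg _)
  _ = ‖slc x c‖ ^ 2 := by ring

lemma kron_selfadj {A : Matrix (Fin n) (Fin n) ℝ} (hA : A.IsHermitian)
    (x y : CVec n p) : ⟪kron A x, y⟫ = ⟪x, kron A y⟫ := by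
  have hsymm : ∀ i j, A j i = A i j := fun i j => by
    have := hA.apply i j
    simpa using this
  have base : ∀ v w : Ev n, ⟪Matrix.toEuclideanLin A v, w⟫ = ⟪v, Matrix.toEuclideanLin A w⟫ := by
    intro v w
    rw [inner_vec, inner_vec]
    have l1 : ∀ i, Matrix.toEuclideanLin A v i * w i = ∑ j, A i j * v j * w i := by
      intro i; rw [toEuclideanLin_apply']; rw [Finset.sum_mul]
    have l2 : ∀ j, v j * Matrix.toEuclideanLin A w j = ∑ i, v j * (A j i * w i) := by
      intro j; rw [toEuclideanLin_apply', Finset.mul_sum]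
    simp only [l1, l2]
    rw [Finset.sum_comm]
    apply Finset.sum_congr rfl; intro j _
    apply Finset.sum_congr rfl; intro i _
    rw [hsymm i j]; ring
  rw [inner_slc, inner_slc]
  apply Finset.sum_congr rfl
  intro c _
  rw [kron_slc, kron_slc]
  exact base _ _

lemma kron_sub (A : Matrix (Fin n) (Fin n) ℝ) (x y : CVec n p) :
    kron A (x - y) = kron A x - kron A y := by
  refine PiLp.ext fun i => ?_
  show ∑ j, A i j • (x j - y j) = (∑ j, A i j • x j) - ∑ j, A i j • y j
  rw [← Finset.sum_sub_distrib]
  exact Finset.sum_congr rfl fun j _ => smul_sub _ _ _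

lemma pow_rowsum {W : Matrix (Fin n) (Fin n) ℝ} (hrow : ∀ i, ∑ j, W i j = 1)
    (t : ℕ) : ∀ i, ∑ j, (W ^ t) i j = 1 := by
  induction t with
  | zero => intro i; simp [Matrix.one_apply]
  | succ k ih =>
    intro i
    rw [pow_succ']
    have : ∀ j, (W * W ^ k) i j = ∑ m, W i m * (W ^ k) m j := fun j => Matrix.mul_apply
    simp only [this]
    rw [Finset.sum_comm]
    have : ∀ m, ∑ j, W i m * (W ^ k) m j = W i m := by
      intro m; rw [← Finset.mul_sum, ih m, mul_one]
    simp only [this]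
    exact hrow i

lemma pow_colsum {W : Matrix (Fin n) (Fin n) ℝ} (hcol : ∀ j, ∑ i, W i j = 1)
    (t : ℕ) : ∀ j, ∑ i, (W ^ t) i j = 1 := by
  induction t with
  | zero => intro j; simp [Matrix.one_apply]
  | succ k ih =>
    intro j
    rw [pow_succ]
    have : ∀ i, (W ^ k * W) i j = ∑ m, (W ^ k) i m * W m j := fun i => Matrix.mul_apply
    simp only [this]
    rw [Finset.sum_comm]
    have : ∀ m, ∑ i, (W ^ k) i m * W m j = W m j := by
      intro m; rw [← Finset.sum_mul, ih m, one_mul]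
    simp only [this]
    exact hcol j

def onesC (n : ℕ) {p : ℕ} (v : Vec p) : CVec n p := WithLp.toLp 2 (fun _ => v)

lemma kron_onesC {W : Matrix (Fin n) (Fin n) ℝ} (hrow : ∀ i, ∑ j, W i j = 1)
    (v : Vec p) : kron W (onesC n v) = onesC n v := by
  refine PiLp.ext fun i => ?_
  show ∑ j, W i j • v = v
  rw [← Finset.sum_smul, hrow i, one_smul]

lemma sum_kron {W : Matrix (Fin n) (Fin n) ℝ} (hcol : ∀ j, ∑ i, W i j = 1)
    (x : CVec n p) : ∑ i, kron W x i = ∑ j, x j := by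
  show ∑ i, ∑ j, W i j • x j = ∑ j, x j
  rw [Finset.sum_comm]
  apply Finset.sum_congr rfl
  intro j _
  rw [← Finset.sum_smul, hcol j, one_smul]

lemma inner_onesC (x : CVec n p) (v : Vec p) : ⟪x, onesC n v⟫ = ⟪∑ i, x i, v⟫ := by
  rw [inner_cvec, sum_inner]
  rfl

lemma normsq_onesC (v : Vec p) : ‖(onesC n v : CVec n p)‖ ^ 2 = n * ‖v‖ ^ 2 := by
  rw [normsq_piLp]
  simp [onesC]

lemma norm_le_of_sq_le {a b : ℝ} (hb : 0 ≤ b) (h : a ^ 2 ≤ b ^ 2) (ha : 0 ≤ a) : a ≤ b := by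
  have h1 := Real.sqrt_le_sqrt h
  rwa [Real.sqrt_sq ha, Real.sqrt_sq hb] at h1

/-- removing the mean decreases the norm -/
lemma proj_norm_le (hn : 1 ≤ n) (x : CVec n p) :
    ‖x - onesC n ((n:ℝ)⁻¹ • ∑ i, x i)‖ ≤ ‖x‖ := by
  have hnR : (0:ℝ) < n := by exact_mod_cast hn
  set s : Vec p := ∑ i, x i with hs
  set m : Vec p := (n:ℝ)⁻¹ • s with hm
  have hsq : ‖x - onesC n m‖ ^ 2 = ‖x‖ ^ 2 - (n:ℝ)⁻¹ * ‖s‖ ^ 2 := by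
    rw [norm_sub_sq_real, inner_onesC, normsq_onesC]
    rw [hm, real_inner_smul_right, real_inner_self_eq_norm_sq]
    rw [norm_smul, Real.norm_eq_abs, abs_of_pos (by positivity : (0:ℝ) < (n:ℝ)⁻¹), mul_pow]
    rw [← hs]
    field_simp
    ring
  have : ‖x - onesC n m‖ ^ 2 ≤ ‖x‖ ^ 2 := by
    rw [hsq]
    have : 0 ≤ (n:ℝ)⁻¹ * ‖s‖ ^ 2 := by positivity
    linarith
  exact norm_le_of_sq_le (norm_nonneg _) this (norm_nonneg _)

/-- slices of the centered vector are orthogonal to ones -/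
lemma slc_centered_perp (hn : 1 ≤ n) (x : CVec n p) (c : Fin p) :
    ⟪onesV n, slc (x - onesC n ((n:ℝ)⁻¹ • ∑ i, x i)) c⟫ = 0 := by
  have hnR : (0:ℝ) < n := by exact_mod_cast hn
  rw [inner_onesV]
  have hcoord : ∀ i : Fin n, slc (x - onesC n ((n:ℝ)⁻¹ • ∑ i, x i)) c i
      = x i c - (n:ℝ)⁻¹ * (∑ j, x j) c := by
    intro i
    show (x - onesC n ((n:ℝ)⁻¹ • ∑ i, x i)) i c = _
    have h1 : (x - onesC n ((n:ℝ)⁻¹ • ∑ i, x i)) i = x i - (n:ℝ)⁻¹ • ∑ j, x j := rfl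
    rw [h1]
    show x i c - ((n:ℝ)⁻¹ • ∑ j, x j) c = _
    rfl
  simp only [hcoord]
  rw [Finset.sum_sub_distrib, Finset.sum_const, Finset.card_univ, Fintype.card_fin]
  have hsum : (∑ j, x j) c = ∑ j, x j c := by
    rw [WithLp.ofLp_sum, Finset.sum_apply]
  rw [hsum]
  field_simp
  rw [nsmul_eq_mul, mul_div_cancel₀ _ hnR.ne', sub_self]

/-- gradient of the average function -/
lemma fbar_hasGradient {f : Fin n → Vec p → ℝ} (hdiff : ∀ i, Differentiable ℝ (f i))
    {fbar : Vec p → ℝ} (hfbar : ∀ z, fbar z = (n : ℝ)⁻¹ * ∑ i, f i z) (z : Vec p) :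
    HasGradientAt fbar ((n : ℝ)⁻¹ • ∑ i, gradient (f i) z) z := by
  have hfd : ∀ i : Fin n, HasFDerivAt (f i)
      (InnerProductSpace.toDual ℝ (Vec p) (gradient (f i) z)) z :=
    fun i => hasGradientAt_iff_hasFDerivAt.1 ((hdiff i z).hasGradientAt)
  have hsum : HasFDerivAt (fun z => ∑ i, f i z)
      (∑ i, InnerProductSpace.toDual ℝ (Vec p) (gradient (f i) z)) z :=
    HasFDerivAt.fun_sum (fun i _ => hfd i)
  have hmul := hsum.const_mul ((n : ℝ)⁻¹)
  have hfun : (fun z => (n : ℝ)⁻¹ * ∑ i, f i z) = fbar := by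
    funext w; rw [hfbar w]
  rw [hfun] at hmul
  rw [hasGradientAt_iff_hasFDerivAt]
  rw [map_smul, map_sum]
  exact hmul

/-- evolution of the mean under one DGD step -/
lemma mean_step {A : Matrix (Fin n) (Fin n) ℝ} (hcolA : ∀ j, ∑ i, A i j = 1)
    (α : ℝ) (x G : CVec n p) :
    (n : ℝ)⁻¹ • ∑ i, (kron A x - α • G) i =
      (n : ℝ)⁻¹ • ∑ i, x i - α • ((n : ℝ)⁻¹ • ∑ i, G i) := by
  have hsum : ∑ i, (kron A x - α • G) i = (∑ i, kron A x i) - α • ∑ i, G i := by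
    have hpt : ∀ i : Fin n, (kron A x - α • G) i = kron A x i - α • G i := fun i => rfl
    simp only [hpt]
    rw [Finset.sum_sub_distrib, ← Finset.smul_sum]
  have hkron : ∑ i, kron A x i = ∑ j, x j := by
    show ∑ i, ∑ j, A i j • x j = ∑ j, x j
    rw [Finset.sum_comm]
    apply Finset.sum_congr rfl
    intro j _
    rw [← Finset.sum_smul, hcolA j, one_smul]
  rw [hsum, hkron, smul_sub, smul_comm]

/-- the Lyapunov descent inequality -/
lemma lyapunov_step {A : Matrix (Fin n) (Fin n) ℝ} (hA : A.IsHermitian) {lam L α : ℝ}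
    (hquad : ∀ y : CVec n p, lam * ‖y‖ ^ 2 ≤ ⟪y, kron A y⟫)
    {F : CVec n p → ℝ} {G : CVec n p → CVec n p}
    (hqubF : ∀ a b : CVec n p, F b ≤ F a + ⟪G a, b - a⟫ + L / 2 * ‖b - a‖ ^ 2)
    (hα : 0 < α) (hαL : α * L ≤ 1 + lam) (a : CVec n p) :
    F (kron A a - α • G a) +
      (1 / (2 * α)) * (‖kron A a - α • G a‖ ^ 2 -
        ⟪kron A a - α • G a, kron A (kron A a - α • G a)⟫) ≤
    F a + (1 / (2 * α)) * (‖a‖ ^ 2 - ⟪a, kron A a⟫) := by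
  suffices h : ∀ b : CVec n p, b = kron A a - α • G a →
      F b + (1 / (2 * α)) * (‖b‖ ^ 2 - ⟪b, kron A b⟫) ≤
        F a + (1 / (2 * α)) * (‖a‖ ^ 2 - ⟪a, kron A a⟫) by
    exact h _ rfl
  intro b hb
  have hGa : α • G a = kron A a - b := by rw [hb]; abel
  have hq := hqubF a b
  have hinner : α * ⟪G a, b - a⟫ = ⟪kron A a - b, b - a⟫ := by
    rw [← real_inner_smul_left, hGa]
  have c1 : ⟪kron A a, b⟫ = ⟪a, kron A b⟫ := kron_selfadj hA a b
  have hZd := hquad (a - b)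
  have hZd_expand : ⟪a - b, kron A (a - b)⟫ =
      ⟪a, kron A a⟫ - ⟪a, kron A b⟫ - ⟪b, kron A a⟫ + ⟪b, kron A b⟫ := by
    rw [kron_sub, inner_sub_left, inner_sub_right, inner_sub_right]
    ring
  have hd_expand : ‖a - b‖ ^ 2 = ‖a‖ ^ 2 - 2 * ⟪a, b⟫ + ‖b‖ ^ 2 := by
    rw [norm_sub_sq_real]
  have hident : ⟪kron A a - b, b - a⟫ =
      ⟪a, kron A b⟫ - ⟪kron A a, a⟫ - ‖b‖ ^ 2 + ⟪b, a⟫ := by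
    rw [inner_sub_left, inner_sub_right, inner_sub_right, c1, ← real_inner_self_eq_norm_sq]
    ring
  have comm1 : ⟪kron A a, a⟫ = ⟪a, kron A a⟫ := real_inner_comm _ _
  have comm2 : ⟪b, kron A a⟫ = ⟪kron A a, b⟫ := real_inner_comm _ _
  have comm3 : ⟪b, a⟫ = ⟪a, b⟫ := real_inner_comm _ _
  have hkey : ⟪kron A a - b, b - a⟫ + (1/2) * (‖b‖ ^ 2 - ⟪b, kron A b⟫)
      - (1/2) * (‖a‖ ^ 2 - ⟪a, kron A a⟫) =
      -(1/2) * (‖a - b‖ ^ 2 + ⟪a - b, kron A (a - b)⟫) := by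
    rw [hident, hZd_expand, hd_expand, comm1, comm2, c1, comm3]
    ring
  have hlam : lam * ‖a - b‖ ^ 2 ≤ ⟪a - b, kron A (a - b)⟫ := hZd
  have hq' : α * (F b - F a) ≤ ⟪kron A a - b, b - a⟫ + α * (L / 2) * ‖b - a‖ ^ 2 := by
    have := mul_le_mul_of_nonneg_left (by linarith [hq] : F b - F a ≤ ⟪G a, b - a⟫
      + L / 2 * ‖b - a‖ ^ 2) hα.le
    calc α * (F b - F a) ≤ α * (⟪G a, b - a⟫ + L / 2 * ‖b - a‖ ^ 2) := this
    _ = α * ⟪G a, b - a⟫ + α * (L / 2) * ‖b - a‖ ^ 2 := by ring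
    _ = ⟪kron A a - b, b - a⟫ + α * (L / 2) * ‖b - a‖ ^ 2 := by rw [hinner]
  have hnorm_ba : ‖b - a‖ ^ 2 = ‖a - b‖ ^ 2 := by rw [norm_sub_rev]
  rw [hnorm_ba] at hq'
  have hL2 : α * (L / 2) * ‖a - b‖ ^ 2 ≤ (1 + lam) / 2 * ‖a - b‖ ^ 2 := by
    apply mul_le_mul_of_nonneg_right _ (sq_nonneg _)
    linarith
  have hgoal : α * (F b + (1 / (2 * α)) * (‖b‖ ^ 2 - ⟪b, kron A b⟫)
      - F a - (1 / (2 * α)) * (‖a‖ ^ 2 - ⟪a, kron A a⟫)) ≤ 0 := by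
    have hαne : α ≠ 0 := ne_of_gt hα
    have e : α * (F b + (1 / (2 * α)) * (‖b‖ ^ 2 - ⟪b, kron A b⟫)
        - F a - (1 / (2 * α)) * (‖a‖ ^ 2 - ⟪a, kron A a⟫)) =
        α * (F b - F a) + (1/2) * (‖b‖ ^ 2 - ⟪b, kron A b⟫)
        - (1/2) * (‖a‖ ^ 2 - ⟪a, kron A a⟫) := by
      field_simp
      ring
    rw [e]
    linarith [hq', hkey, hlam, hL2]
  nlinarith [hgoal, hα]

lemma coord_norm_le {n p : ℕ} (x : CVec n p) (i : Fin n) : ‖x i‖ ≤ ‖x‖ := by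
  have h1 : ‖x i‖ ^ 2 ≤ ‖x‖ ^ 2 := by
    rw [normsq_piLp]
    exact Finset.single_le_sum (f := fun j => ‖x j‖ ^ 2) (fun j _ => sq_nonneg _)
      (Finset.mem_univ i)
  exact norm_le_of_sq_le (norm_nonneg _) h1 (norm_nonneg _)

lemma final_bound (v e : E) {α δ : ℝ} (hα : 0 < α) (hδ : 0 < δ) :
    ‖v - α • e‖ ^ 2 ≤ (1 + α * δ) * ‖v‖ ^ 2 + (α ^ 2 + α * δ⁻¹) * ‖e‖ ^ 2 := by
  have hexp : ‖v - α • e‖ ^ 2 = ‖v‖ ^ 2 - 2 * α * ⟪v, e⟫ + α ^ 2 * ‖e‖ ^ 2 := by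
    rw [norm_sub_sq_real, real_inner_smul_right, norm_smul, Real.norm_eq_abs, mul_pow, sq_abs]
    ring
  have hCS : -⟪v, e⟫ ≤ ‖v‖ * ‖e‖ := by
    have h := abs_real_inner_le_norm v e
    have := abs_le.1 h
    linarith [this.1]
  have hinv : δ * δ⁻¹ = 1 := mul_inv_cancel₀ hδ.ne'
  have hAM : 2 * (‖v‖ * ‖e‖) ≤ δ * ‖v‖ ^ 2 + δ⁻¹ * ‖e‖ ^ 2 := by
    nlinarith [sq_nonneg (δ * ‖v‖ - ‖e‖), hδ, hinv]
  nlinarith [hexp, mul_le_mul_of_nonneg_left hCS (by positivity : (0:ℝ) ≤ 2 * α),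
    mul_le_mul_of_nonneg_left hAM hα.le]

end Aux

/-- Bounded distance to optimal solution for DGDᵗ: if
`α ≤ min{(1 + λₙ(Wᵗ))/L, c₄}` and `x₀ = 0`, then for every `δ > 0` and every `k ≥ 0`,
`‖x̄_{k+1} − x*‖² ≤ c₁²‖x̄_k − x*‖² + c₃²/(1 − βᵗ)²`. -/
theorem dgdt_bounded_distance_to_minimum
    (n p t : ℕ) (hn : 1 ≤ n) (hp : 1 ≤ p) (ht : 1 ≤ t)
    -- local objective functions: convex, differentiable, with Lᵢ-Lipschitz gradients
    (f : Fin n → Vec p → ℝ) (Lc : Fin n → ℝ) (L : ℝ)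
    (hconv : ∀ i, ConvexOn ℝ Set.univ (f i))
    (hdiff : ∀ i, Differentiable ℝ (f i))
    (hLpos : ∀ i, 0 < Lc i)
    (hLip : ∀ i, LipschitzWith (Real.toNNReal (Lc i)) (fun z => gradient (f i) z))
    (hLmax : IsGreatest (Set.range Lc) L)
    -- each fᵢ attains its minimum at xsᵢ
    (xs : Fin n → Vec p) (hxs : ∀ i, ∀ z, f i (xs i) ≤ f i z)
    -- the average function f̄ = (1/n) ∑ᵢ fᵢ: μ_f̄-strongly convex with
    -- L_f̄-Lipschitz gradient and unique minimizer x*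
    (fbar : Vec p → ℝ) (hfbar : ∀ z, fbar z = (n : ℝ)⁻¹ * ∑ i, f i z)
    (μf Lf : ℝ) (hμf : 0 < μf) (hLf : 0 < Lf)
    (hfbarsc : StrongConvexOn Set.univ μf fbar)
    (hfbarLip : LipschitzWith (Real.toNNReal Lf) (fun z => gradient fbar z))
    (xstar : Vec p) (hxstar : ∀ z, fbar xstar ≤ fbar z)
    (hxstaru : ∀ z, fbar z = fbar xstar → z = xstar)
    -- W is symmetric, doubly stochastic, with eigenvalues in (−1, 1],
    -- exactly one eigenvalue equal to 1
    (W : Matrix (Fin n) (Fin n) ℝ) (hWsymm : W.IsHermitian)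
    (hrow : ∀ i, ∑ j, W i j = 1) (hcol : ∀ j, ∑ i, W i j = 1)
    (hWnn : ∀ i j, 0 ≤ W i j)
    (heig : ∀ i, hWsymm.eigenvalues i ∈ Set.Ioc (-1 : ℝ) 1)
    (hone : ∃! i, hWsymm.eigenvalues i = 1)
    -- β ∈ (0,1): the second largest magnitude of the eigenvalues of W
    (β : ℝ) (hβmem : β ∈ Set.Ioo (0 : ℝ) 1)
    (hβ : IsGreatest {r : ℝ | ∃ i, hWsymm.eigenvalues i ≠ 1 ∧ r = |hWsymm.eigenvalues i|} β)
    -- λₙ(Wᵗ): the smallest eigenvalue of Wᵗ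
    (hWt : (W ^ t).IsHermitian)
    (lam : ℝ) (hlam : IsLeast (Set.range hWt.eigenvalues) lam)
    -- constants c₂, c₄, D
    (c2 c4 D : ℝ)
    (hc2 : c2 = 2 * μf * Lf / (μf + Lf))
    (hc4 : c4 = 2 / (μf + Lf))
    (hD : D = Real.sqrt (2 * L * ∑ i, (f i 0 - f i (xs i))))
    -- stepsize condition α ≤ min{(1 + λₙ(Wᵗ))/L, c₄}
    (α : ℝ) (hα : 0 < α) (hαle : α ≤ min ((1 + lam) / L) c4)
    -- DGDᵗ iterates starting from x₀ = 0, and their mean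
    (x : ℕ → CVec n p) (hx0 : x 0 = 0)
    (hiter : ∀ k, x (k + 1) = kron (W ^ t) (x k) - α • gradConcat f (x k))
    (xbar : ℕ → Vec p) (hxbar : ∀ k, xbar k = (n : ℝ)⁻¹ • ∑ i, x k i)
    -- free parameter δ > 0
    (δ : ℝ) (hδ : 0 < δ) :
    ∀ k, ‖xbar (k + 1) - xstar‖ ^ 2 ≤
      (1 - α * c2 + α * δ - α ^ 2 * δ * c2) * ‖xbar k - xstar‖ ^ 2 +
        (α ^ 3 * (α + δ⁻¹) * L ^ 2 * D ^ 2) / (1 - β ^ t) ^ 2 := by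
  intro k
  -- basic constants
  obtain ⟨iL, hiL⟩ := hLmax.1
  have hL : 0 < L := hiL ▸ hLpos iL
  have hLc_le : ∀ i, Lc i ≤ L := fun i => hLmax.2 ⟨i, rfl⟩
  have hβ0 : (0:ℝ) < β := hβmem.1
  have hβ1 : β < 1 := hβmem.2
  have hβt1 : β ^ t < 1 := pow_lt_one₀ hβ0.le hβ1 (by omega)
  have hβtnn : (0:ℝ) ≤ β ^ t := by positivity
  have h1mβ : (0:ℝ) < 1 - β ^ t := by linarith
  obtain ⟨i0, hi0eq, hi0uniq⟩ := hone
  have hβub : ∀ i, hWsymm.eigenvalues i ≠ 1 → |hWsymm.eigenvalues i| ≤ β :=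
    fun i h => hβ.2 ⟨i, h, rfl⟩
  have habs1 : ∀ i, |hWsymm.eigenvalues i| ≤ 1 :=
    fun i => abs_le.2 ⟨(heig i).1.le, (heig i).2⟩
  have hαmin := le_min_iff.1 hαle
  have hαL : α * L ≤ 1 + lam := by
    have h := hαmin.1
    rwa [le_div_iff₀ hL] at h
  have hαc4 : α ≤ 2 / (μf + Lf) := by rw [← hc4]; exact hαmin.2
  have hnR : (0:ℝ) < n := by exact_mod_cast hn
  -- per-block gradient facts
  have hg : ∀ i (z : Vec p), HasGradientAt (f i) (gradient (f i) z) z :=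
    fun i z => (hdiff i z).hasGradientAt
  have hlip : ∀ i (a b : Vec p), ‖gradient (f i) a - gradient (f i) b‖ ≤ Lc i * ‖a - b‖ := by
    intro i a b
    have h := (hLip i).dist_le_mul a b
    rwa [dist_eq_norm, dist_eq_norm, Real.coe_toNNReal _ (hLpos i).le] at h
  have hlipL : ∀ i (a b : Vec p), ‖gradient (f i) a - gradient (f i) b‖ ≤ L * ‖a - b‖ :=
    fun i a b => (hlip i a b).trans (mul_le_mul_of_nonneg_right (hLc_le i) (norm_nonneg _))
  -- D
  have hsum0 : (0:ℝ) ≤ ∑ i, (f i 0 - f i (xs i)) :=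
    Finset.sum_nonneg fun i _ => sub_nonneg.2 (hxs i 0)
  have hD0 : 0 ≤ D := hD ▸ Real.sqrt_nonneg _
  have hD2 : D ^ 2 = 2 * L * ∑ i, (f i 0 - f i (xs i)) := by
    rw [hD, Real.sq_sqrt (mul_nonneg (by positivity) hsum0)]
  -- the aggregate objective
  set F : CVec n p → ℝ := fun z => ∑ i, f i (z i) with hF
  set Fs : ℝ := ∑ i, f i (xs i) with hFs
  have hqubBlock : ∀ i (a b : Vec p),
      f i b ≤ f i a + ⟪gradient (f i) a, b - a⟫ + L / 2 * ‖b - a‖ ^ 2 := by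
    intro i a b
    have h1 := qub (hg i) (hLpos i).le (hlip i) a b
    have h2 : Lc i / 2 * ‖b - a‖ ^ 2 ≤ L / 2 * ‖b - a‖ ^ 2 := by
      apply mul_le_mul_of_nonneg_right _ (sq_nonneg _)
      linarith [hLc_le i]
    linarith
  have hqubF : ∀ a b : CVec n p,
      F b ≤ F a + ⟪gradConcat f a, b - a⟫ + L / 2 * ‖b - a‖ ^ 2 := by
    intro a b
    have hin : ⟪gradConcat f a, b - a⟫ = ∑ i, ⟪gradient (f i) (a i), b i - a i⟫ := by
      rw [inner_cvec]
      exact Finset.sum_congr rfl fun i _ => rfl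
    have hnm : ‖b - a‖ ^ 2 = ∑ i, ‖b i - a i‖ ^ 2 := by
      rw [normsq_piLp]
      exact Finset.sum_congr rfl fun i _ => rfl
    calc F b = ∑ i, f i (b i) := rfl
    _ ≤ ∑ i, (f i (a i) + ⟪gradient (f i) (a i), b i - a i⟫ + L / 2 * ‖b i - a i‖ ^ 2) :=
        Finset.sum_le_sum fun i _ => hqubBlock i (a i) (b i)
    _ = F a + ⟪gradConcat f a, b - a⟫ + L / 2 * ‖b - a‖ ^ 2 := by
        rw [hin, hnm, Finset.sum_add_distrib, Finset.sum_add_distrib, Finset.mul_sum]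
  have hquadWt : ∀ y : CVec n p, lam * ‖y‖ ^ 2 ≤ ⟪y, kron (W ^ t) y⟫ :=
    kron_quad_lower (quad_lower (W ^ t) hWt (fun i => hlam.2 ⟨i, rfl⟩))
  -- Lyapunov function
  set Ξ : ℕ → ℝ :=
    fun k => F (x k) + (1 / (2 * α)) * (‖x k‖ ^ 2 - ⟪x k, kron (W ^ t) (x k)⟫) with hΞ
  have hxistep : ∀ m, Ξ (m + 1) ≤ Ξ m := by
    intro m
    have h := lyapunov_step hWt hquadWt hqubF hα hαL (x m)
    rw [hΞ]
    simpa [hiter m] using h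
  have hximono : ∀ m, Ξ m ≤ Ξ 0 := by
    intro m
    induction m with
    | zero => exact le_refl _
    | succ j ih => exact (hxistep j).trans ih
  have hΞ0 : Ξ 0 = F 0 := by
    rw [hΞ]
    simp [hx0]
  have hFlow : ∀ m, F (x m) ≤ Ξ m := by
    intro m
    have h1 : ⟪x m, kron (W ^ t) (x m)⟫ ≤ ‖x m‖ ^ 2 :=
      kron_quad_upper (fun v => Wpow_norm_le hWsymm habs1 t v) (x m)
    have h2 : 0 ≤ (1 / (2 * α)) * (‖x m‖ ^ 2 - ⟪x m, kron (W ^ t) (x m)⟫) :=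
      mul_nonneg (by positivity) (by linarith)
    rw [hΞ]
    linarith
  have hF0 : F 0 - Fs = ∑ i, (f i 0 - f i (xs i)) := by
    have h0 : F 0 = ∑ i, f i 0 := rfl
    rw [h0, hFs, Finset.sum_sub_distrib]
  -- gradient bound along the trajectory
  have hgbnd : ∀ m, ‖gradConcat f (x m)‖ ≤ D := by
    intro m
    have hsq : ‖gradConcat f (x m)‖ ^ 2 ≤ 2 * L * (F (x m) - Fs) := by
      rw [normsq_piLp]
      have hterm : ∀ i, ‖gradConcat f (x m) i‖ ^ 2 ≤ 2 * L * (f i (x m i) - f i (xs i)) := by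
        intro i
        have hz : gradient (f i) (xs i) = 0 := grad_zero_of_isMinOn (hg i (xs i)) (hxs i)
        have key := lower_quad (hconv i) (hg i) (hLpos i)
          (qub (hg i) (hLpos i).le (hlip i)) (xs i) (x m i)
        rw [hz, inner_zero_left, sub_zero] at key
        have h1 : ‖gradient (f i) (x m i)‖ ^ 2 ≤ 2 * Lc i * (f i (x m i) - f i (xs i)) := by
          have h2 : (0:ℝ) < 2 * Lc i := by linarith [hLpos i]
          have hkey2 : 1 / (2 * Lc i) * ‖gradient (f i) (x m i)‖ ^ 2 ≤
              f i (x m i) - f i (xs i) := by linarith [key]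
          have h5 := mul_le_mul_of_nonneg_left hkey2 h2.le
          have h6 : (2 * Lc i) * (1 / (2 * Lc i) * ‖gradient (f i) (x m i)‖ ^ 2) =
              ‖gradient (f i) (x m i)‖ ^ 2 := by field_simp; exact mul_div_cancel_left₀ _ (hLpos i).ne'
          rw [h6] at h5
          exact h5
        have h3 : 0 ≤ f i (x m i) - f i (xs i) := sub_nonneg.2 (hxs i _)
        have h4 : 2 * Lc i * (f i (x m i) - f i (xs i)) ≤
            2 * L * (f i (x m i) - f i (xs i)) := by
          apply mul_le_mul_of_nonneg_right _ h3
          linarith [hLc_le i]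
        exact le_trans (by exact h1) h4
      calc ∑ i, ‖gradConcat f (x m) i‖ ^ 2
          ≤ ∑ i, 2 * L * (f i (x m i) - f i (xs i)) := Finset.sum_le_sum fun i _ => hterm i
      _ = 2 * L * (F (x m) - Fs) := by
          rw [← Finset.mul_sum]
          congr 1
          rw [hF, hFs]
          rw [Finset.sum_sub_distrib]
    have hmono : F (x m) - Fs ≤ F 0 - Fs := by linarith [hFlow m, hximono m, hΞ0]
    have hsq2 : ‖gradConcat f (x m)‖ ^ 2 ≤ D ^ 2 := by
      rw [hD2, ← hF0]
      calc ‖gradConcat f (x m)‖ ^ 2 ≤ 2 * L * (F (x m) - Fs) := hsq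
      _ ≤ 2 * L * (F 0 - Fs) := mul_le_mul_of_nonneg_left hmono (by positivity)
    exact norm_le_of_sq_le hD0 hsq2 (norm_nonneg _)
  -- consensus bound
  have hconsbound : ∀ m, ‖x m - onesC n ((n:ℝ)⁻¹ • ∑ i, x m i)‖ ≤ α * D / (1 - β ^ t) := by
    intro m
    induction m with
    | zero =>
      have h1 : ∑ i, x 0 i = 0 := by
        rw [hx0]
        exact Finset.sum_eq_zero fun i _ => rfl
      have h2 : x 0 - onesC n ((n:ℝ)⁻¹ • ∑ i, x 0 i) = 0 := by
        rw [h1, smul_zero, hx0]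
        show (0 : CVec n p) - onesC n 0 = 0
        have : onesC n (0 : Vec p) = (0 : CVec n p) := rfl
        rw [this, sub_zero]
      rw [h2, norm_zero]
      positivity
    | succ m ih =>
      have hmean : (n:ℝ)⁻¹ • ∑ i, x (m+1) i =
          ((n:ℝ)⁻¹ • ∑ i, x m i) - α • ((n:ℝ)⁻¹ • ∑ i, gradConcat f (x m) i) := by
        rw [hiter m]
        exact mean_step (pow_colsum hcol t) α (x m) (gradConcat f (x m))
      have hid : x (m+1) - onesC n ((n:ℝ)⁻¹ • ∑ i, x (m+1) i) =
          kron (W ^ t) (x m - onesC n ((n:ℝ)⁻¹ • ∑ i, x m i)) -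
            α • (gradConcat f (x m) -
              onesC n ((n:ℝ)⁻¹ • ∑ i, gradConcat f (x m) i)) := by
        rw [hmean, hiter m]
        rw [kron_sub, kron_onesC (pow_rowsum hrow t)]
        have h2 : onesC n (((n:ℝ)⁻¹ • ∑ i, x m i) -
            α • ((n:ℝ)⁻¹ • ∑ i, gradConcat f (x m) i)) =
            onesC n ((n:ℝ)⁻¹ • ∑ i, x m i) -
              α • onesC n ((n:ℝ)⁻¹ • ∑ i, gradConcat f (x m) i) := rfl
        rw [h2, smul_sub]
        abel
      rw [hid]
      have hkq : ‖kron (W ^ t) (x m - onesC n ((n:ℝ)⁻¹ • ∑ i, x m i))‖ ≤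
          β ^ t * ‖x m - onesC n ((n:ℝ)⁻¹ • ∑ i, x m i)‖ := by
        apply kron_norm_le hβtnn (P := fun v => ⟪onesV n, v⟫ = 0)
        · intro v hv
          exact (Wpow_perp_contract hWsymm hn hrow hcol hβ0.le hβub hi0uniq t hv).1
        · intro c
          exact slc_centered_perp hn (x m) c
      have hpg : ‖gradConcat f (x m) -
          onesC n ((n:ℝ)⁻¹ • ∑ i, gradConcat f (x m) i)‖ ≤ D :=
        (proj_norm_le hn (gradConcat f (x m))).trans (hgbnd m)
      calc ‖kron (W ^ t) (x m - onesC n ((n:ℝ)⁻¹ • ∑ i, x m i)) -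
            α • (gradConcat f (x m) - onesC n ((n:ℝ)⁻¹ • ∑ i, gradConcat f (x m) i))‖
          ≤ ‖kron (W ^ t) (x m - onesC n ((n:ℝ)⁻¹ • ∑ i, x m i))‖ +
            ‖α • (gradConcat f (x m) -
              onesC n ((n:ℝ)⁻¹ • ∑ i, gradConcat f (x m) i))‖ := norm_sub_le _ _
      _ ≤ β ^ t * (α * D / (1 - β ^ t)) + α * D := by
          apply add_le_add
          · exact hkq.trans (mul_le_mul_of_nonneg_left ih hβtnn)
          · rw [norm_smul, Real.norm_eq_abs, abs_of_pos hα]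
            exact mul_le_mul_of_nonneg_left hpg hα.le
      _ = α * D / (1 - β ^ t) := by
          field_simp
          ring
  -- gradient of fbar
  have hgF : ∀ z : Vec p, HasGradientAt fbar ((n:ℝ)⁻¹ • ∑ i, gradient (f i) z) z :=
    fun z => fbar_hasGradient hdiff hfbar z
  have hgradfbar : ∀ z, gradient fbar z = (n:ℝ)⁻¹ • ∑ i, gradient (f i) z :=
    fun z => (hgF z).gradient
  have hgFlip : ∀ a b : Vec p, ‖((n:ℝ)⁻¹ • ∑ i, gradient (f i) a) -
      ((n:ℝ)⁻¹ • ∑ i, gradient (f i) b)‖ ≤ Lf * ‖a - b‖ := by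
    intro a b
    have h := hfbarLip.dist_le_mul a b
    rw [dist_eq_norm, dist_eq_norm, Real.coe_toNNReal _ hLf.le] at h
    rwa [hgradfbar a, hgradfbar b] at h
  have hcontr := contraction (g := fun z => (n:ℝ)⁻¹ • ∑ i, gradient (f i) z)
    hμf hLf hfbarsc hgF hgFlip hxstar hα hαc4 (xbar k)
  -- evolution of the mean
  have hstep : xbar (k+1) = xbar k - α • ((n:ℝ)⁻¹ • ∑ i, gradient (f i) (x k i)) := by
    rw [hxbar (k+1), hiter k,
      mean_step (pow_colsum hcol t) α (x k) (gradConcat f (x k)), ← hxbar k]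
    rfl
  obtain ⟨e, he⟩ : ∃ e : Vec p, e = ((n:ℝ)⁻¹ • ∑ i, gradient (f i) (x k i)) -
      ((n:ℝ)⁻¹ • ∑ i, gradient (f i) (xbar k)) := ⟨_, rfl⟩
  have hdecomp : xbar (k+1) - xstar =
      (xbar k - α • ((n:ℝ)⁻¹ • ∑ i, gradient (f i) (xbar k)) - xstar) - α • e := by
    rw [hstep, he, smul_sub]
    abel
  -- bound on e
  have hebound : ‖e‖ ≤ L * (α * D / (1 - β ^ t)) := by
    rw [he]
    have hcomb : ((n:ℝ)⁻¹ • ∑ i, gradient (f i) (x k i)) -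
        ((n:ℝ)⁻¹ • ∑ i, gradient (f i) (xbar k)) =
        (n:ℝ)⁻¹ • ∑ i, (gradient (f i) (x k i) - gradient (f i) (xbar k)) := by
      rw [Finset.sum_sub_distrib, smul_sub]
    rw [hcomb, norm_smul, Real.norm_eq_abs, abs_of_pos (by positivity : (0:ℝ) < (n:ℝ)⁻¹)]
    have hterm : ∀ i : Fin n, ‖gradient (f i) (x k i) - gradient (f i) (xbar k)‖ ≤
        L * (α * D / (1 - β ^ t)) := by
      intro i
      have h1 := hlipL i (x k i) (xbar k)
      have h2 : x k i - xbar k = (x k - onesC n (xbar k)) i := rfl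
      have h3 : ‖(x k - onesC n (xbar k)) i‖ ≤ ‖x k - onesC n (xbar k)‖ := coord_norm_le _ i
      have h4 : ‖x k - onesC n (xbar k)‖ ≤ α * D / (1 - β ^ t) := by
        have := hconsbound k
        rwa [← hxbar k] at this
      calc ‖gradient (f i) (x k i) - gradient (f i) (xbar k)‖
          ≤ L * ‖x k i - xbar k‖ := h1
      _ = L * ‖(x k - onesC n (xbar k)) i‖ := by rw [h2]
      _ ≤ L * (α * D / (1 - β ^ t)) :=
          mul_le_mul_of_nonneg_left (h3.trans h4) hL.le
    calc (n:ℝ)⁻¹ * ‖∑ i, (gradient (f i) (x k i) - gradient (f i) (xbar k))‖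
        ≤ (n:ℝ)⁻¹ * ∑ i, ‖gradient (f i) (x k i) - gradient (f i) (xbar k)‖ :=
          mul_le_mul_of_nonneg_left (norm_sum_le _ _) (by positivity)
    _ ≤ (n:ℝ)⁻¹ * ∑ _i : Fin n, (L * (α * D / (1 - β ^ t))) :=
          mul_le_mul_of_nonneg_left (Finset.sum_le_sum fun i _ => hterm i) (by positivity)
    _ = L * (α * D / (1 - β ^ t)) := by
          rw [Finset.sum_const, Finset.card_univ, Fintype.card_fin, nsmul_eq_mul]
          field_simp
  -- final assembly
  have hfb := final_bound
    (xbar k - α • ((n:ℝ)⁻¹ • ∑ i, gradient (f i) (xbar k)) - xstar) e hα hδ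
  have hv2 : ‖xbar k - α • ((n:ℝ)⁻¹ • ∑ i, gradient (f i) (xbar k)) - xstar‖ ^ 2 ≤
      (1 - α * c2) * ‖xbar k - xstar‖ ^ 2 := by
    rw [hc2]
    exact hcontr
  have hE2 : ‖e‖ ^ 2 ≤ (L * (α * D / (1 - β ^ t))) ^ 2 :=
    pow_le_pow_left₀ (norm_nonneg _) hebound 2
  have h1δ : (0:ℝ) ≤ 1 + α * δ := by positivity
  have haa : (0:ℝ) ≤ α ^ 2 + α * δ⁻¹ := by positivity
  calc ‖xbar (k+1) - xstar‖ ^ 2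
      = ‖(xbar k - α • ((n:ℝ)⁻¹ • ∑ i, gradient (f i) (xbar k)) - xstar) - α • e‖ ^ 2 := by
        rw [hdecomp]
  _ ≤ (1 + α * δ) * ‖xbar k - α • ((n:ℝ)⁻¹ • ∑ i, gradient (f i) (xbar k)) - xstar‖ ^ 2 +
      (α ^ 2 + α * δ⁻¹) * ‖e‖ ^ 2 := hfb
  _ ≤ (1 + α * δ) * ((1 - α * c2) * ‖xbar k - xstar‖ ^ 2) +
      (α ^ 2 + α * δ⁻¹) * (L * (α * D / (1 - β ^ t))) ^ 2 :=
        add_le_add (mul_le_mul_of_nonneg_left hv2 h1δ)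
          (mul_le_mul_of_nonneg_left hE2 haa)
  _ = (1 - α * c2 + α * δ - α ^ 2 * δ * c2) * ‖xbar k - xstar‖ ^ 2 +
      (α ^ 3 * (α + δ⁻¹) * L ^ 2 * D ^ 2) / (1 - β ^ t) ^ 2 := by
        field_simp
        ring
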